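/- Suppose 𝗏 : ℝ² → ℝ² and 𝗊 : ℝ² → ℝ are bounded, 𝗊 is harmonic on ℝ², 𝗏 satisfies μΔ𝗏 = ∇𝗊 on ℝ² for some μ > 0, and (𝗏, 𝗊)(x₁, x₂) → (±c₁, 0, ±c₂) as x₂ → ±∞ for some constants c₁, c₂. Then 𝗊 = 0, 𝗏 = 0, and c₁ = c₂ = 0. -/

import Mathlib

open Real Filter

/-- First partial derivative. -/
noncomputable def pd1 (f : ℝ × ℝ → ℝ) (x : ℝ × ℝ) : ℝ :=
  deriv (fun t => f (t, x.2)) x.1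

/-- Second partial derivative. -/
noncomputable def pd2 (f : ℝ × ℝ → ℝ) (x : ℝ × ℝ) : ℝ :=
  deriv (fun t => f (x.1, t)) x.2


lemma hasDerivAt_curve1 (x : ℝ × ℝ) : HasDerivAt (fun t : ℝ => (t, x.2)) ((1:ℝ), (0:ℝ)) x.1 :=
  (hasDerivAt_id x.1).prodMk (hasDerivAt_const x.1 x.2)

lemma hasDerivAt_curve2 (x : ℝ × ℝ) : HasDerivAt (fun t : ℝ => (x.1, t)) ((0:ℝ), (1:ℝ)) x.2 :=
  (hasDerivAt_const x.2 x.1).prodMk (hasDerivAt_id x.2)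

lemma pd1_eq_fderiv {f : ℝ × ℝ → ℝ} {x : ℝ × ℝ} (hf : DifferentiableAt ℝ f x) :
    pd1 f x = fderiv ℝ f x (1, 0) := by
  have h := hf.hasFDerivAt.comp_hasDerivAt x.1 (by simpa using hasDerivAt_curve1 x)
  exact h.deriv

lemma pd2_eq_fderiv {f : ℝ × ℝ → ℝ} {x : ℝ × ℝ} (hf : DifferentiableAt ℝ f x) :
    pd2 f x = fderiv ℝ f x (0, 1) := by
  have h := hf.hasFDerivAt.comp_hasDerivAt x.2 (by simpa using hasDerivAt_curve2 x)
  exact h.deriv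

lemma pd1_fderiv_apply {f : ℝ × ℝ → ℝ} {x : ℝ × ℝ}
    (hd : DifferentiableAt ℝ (fderiv ℝ f) x) (v : ℝ × ℝ) :
    pd1 (fun y => fderiv ℝ f y v) x = fderiv ℝ (fderiv ℝ f) x (1, 0) v := by
  have h1 : HasDerivAt (fun t : ℝ => fderiv ℝ f (t, x.2)) (fderiv ℝ (fderiv ℝ f) x (1, 0)) x.1 :=
    hd.hasFDerivAt.comp_hasDerivAt x.1 (by simpa using hasDerivAt_curve1 x)
  have h2 := (ContinuousLinearMap.apply ℝ ℝ v).hasFDerivAt.comp_hasDerivAt x.1 h1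
  exact h2.deriv

lemma pd2_fderiv_apply {f : ℝ × ℝ → ℝ} {x : ℝ × ℝ}
    (hd : DifferentiableAt ℝ (fderiv ℝ f) x) (v : ℝ × ℝ) :
    pd2 (fun y => fderiv ℝ f y v) x = fderiv ℝ (fderiv ℝ f) x (0, 1) v := by
  have h1 : HasDerivAt (fun t : ℝ => fderiv ℝ f (x.1, t)) (fderiv ℝ (fderiv ℝ f) x (0, 1)) x.2 :=
    hd.hasFDerivAt.comp_hasDerivAt x.2 (by simpa using hasDerivAt_curve2 x)
  have h2 := (ContinuousLinearMap.apply ℝ ℝ v).hasFDerivAt.comp_hasDerivAt x.2 h1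
  exact h2.deriv


theorem harmonic_bounded_eq {u : ℝ × ℝ → ℝ} (hu : ContDiff ℝ 2 u) {M : ℝ}
    (hM : ∀ x, |u x| ≤ M) (hharm : ∀ x, pd1 (pd1 u) x + pd2 (pd2 u) x = 0) (x : ℝ × ℝ) :
    u x = u (0, 0) := by
  have hud : Differentiable ℝ u := hu.differentiable (by norm_num)
  have hfd0 : ContDiff ℝ 1 (fderiv ℝ u) := hu.fderiv_right (by norm_num)
  have hfdd0 : Differentiable ℝ (fderiv ℝ u) := hfd0.differentiable one_ne_zero
  have hH : ∀ p : ℝ × ℝ, fderiv ℝ (fderiv ℝ u) p (1,0) (1,0)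
      + fderiv ℝ (fderiv ℝ u) p (0,1) (0,1) = 0 := by
    intro p
    have e1' : pd1 u = fun y => fderiv ℝ u y (1,0) := funext fun y => pd1_eq_fderiv (hud y)
    have e2' : pd2 u = fun y => fderiv ℝ u y (0,1) := funext fun y => pd2_eq_fderiv (hud y)
    have h := hharm p
    rw [e1', e2'] at h
    rwa [pd1_fderiv_apply (hfdd0 p), pd2_fderiv_apply (hfdd0 p)] at h
  have hsymm : ∀ (p v w : ℝ × ℝ), fderiv ℝ (fderiv ℝ u) p v w = fderiv ℝ (fderiv ℝ u) p w v :=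
    fun p v w => second_derivative_symmetric (fun y => (hud y).hasFDerivAt)
      (hfdd0 p).hasFDerivAt v w
  set g : ℂ → ℂ := fun z => Complex.mk (fderiv ℝ u (z.re, z.im) (1,0))
    (-(fderiv ℝ u (z.re, z.im) (0,1))) with hgdef0
  have hgdef : ∀ z : ℂ, g z = Complex.mk (fderiv ℝ u (z.re, z.im) (1,0))
      (-(fderiv ℝ u (z.re, z.im) (0,1))) := fun z => rfl
  have hgd : ∀ z : ℂ, HasDerivAt g
      (Complex.mk (fderiv ℝ (fderiv ℝ u) (z.re, z.im) (1,0) (1,0))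
        (-(fderiv ℝ (fderiv ℝ u) (z.re, z.im) (1,0) (0,1)))) z := by
    intro z
    have hfd : ContDiff ℝ 1 (fderiv ℝ u) := hu.fderiv_right (by norm_num)
    have hfdd : Differentiable ℝ (fderiv ℝ u) := hfd.differentiable one_ne_zero
    set p : ℝ × ℝ := (z.re, z.im) with hp
    set H := fderiv ℝ (fderiv ℝ u) p with hHdef
    set A1 := ContinuousLinearMap.apply ℝ ℝ ((1:ℝ), (0:ℝ)) with hA1
    set A2 := ContinuousLinearMap.apply ℝ ℝ ((0:ℝ), (1:ℝ)) with hA2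
    have hx : HasFDerivAt (fun q => fderiv ℝ u q (1,0)) (A1.comp H) p :=
      A1.hasFDerivAt.comp p (hfdd p).hasFDerivAt
    have hy : HasFDerivAt (fun q => fderiv ℝ u q (0,1)) (A2.comp H) p :=
      A2.hasFDerivAt.comp p (hfdd p).hasFDerivAt
    have hG : HasFDerivAt (fun q : ℝ × ℝ => (fderiv ℝ u q (1,0), -(fderiv ℝ u q (0,1))))
        ((A1.comp H).prod (-(A2.comp H))) p := hx.prodMk hy.neg
    set E1 : ℂ →L[ℝ] ℝ × ℝ := Complex.equivRealProdCLM.toContinuousLinearMap with hE1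
    set E2 : ℝ × ℝ →L[ℝ] ℂ := Complex.equivRealProdCLM.symm.toContinuousLinearMap with hE2
    have h1 : HasFDerivAt (fun w : ℂ => (fderiv ℝ u (w.re, w.im) (1,0), -(fderiv ℝ u (w.re, w.im) (0,1))))
        (((A1.comp H).prod (-(A2.comp H))).comp E1) z := hG.comp z Complex.equivRealProdCLM.toContinuousLinearMap.hasFDerivAt
    have h2 := E2.hasFDerivAt.comp z h1
    set c : ℂ := Complex.mk (H (1,0) (1,0)) (-(H (1,0) (0,1))) with hc
    have hrs : (ContinuousLinearMap.smulRight (1 : ℂ →L[ℂ] ℂ) c).restrictScalars ℝ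
        = E2.comp ((((A1.comp H).prod (-(A2.comp H))).comp E1)) := by
      have hext : ∀ (T S : ℂ →L[ℝ] ℂ), T 1 = S 1 → T Complex.I = S Complex.I → T = S := by
        intro T S hone hI
        ext w
        have e : ∀ (R : ℂ →L[ℝ] ℂ), R w = w.re • R 1 + w.im • R Complex.I := fun R => by
          rw [← map_smul, ← map_smul, ← map_add]
          congr 1
          simp [Complex.real_smul, Complex.re_add_im]
        rw [e T, e S, hone, hI]
      have hE1one : E1 (1:ℂ) = ((1:ℝ),(0:ℝ)) := by
        simp [hE1, Complex.equivRealProd_apply]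
      have hE1I : E1 Complex.I = ((0:ℝ),(1:ℝ)) := by
        simp [hE1, Complex.equivRealProd_apply]
      have hsy : H (0,1) (1,0) = H (1,0) (0,1) := hsymm p (0,1) (1,0)
      have h01 : H (0,1) (0,1) = -(H (1,0) (1,0)) := by linarith [hH p]
      apply hext
      · simp only [ContinuousLinearMap.coe_comp', Function.comp_apply,
          ContinuousLinearMap.coe_restrictScalars', ContinuousLinearMap.smulRight_apply,
          ContinuousLinearMap.one_apply, one_smul, ContinuousLinearMap.prod_apply,
          ContinuousLinearMap.neg_apply, hE1one, hA1, hA2, ContinuousLinearMap.apply_apply,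
          hE2, Complex.equivRealProdCLM_symm_apply]
        simp [hc, Complex.ext_iff]
      · simp only [ContinuousLinearMap.coe_comp', Function.comp_apply,
          ContinuousLinearMap.coe_restrictScalars', ContinuousLinearMap.smulRight_apply,
          ContinuousLinearMap.one_apply, one_smul, ContinuousLinearMap.prod_apply,
          ContinuousLinearMap.neg_apply, hE1I, hA1, hA2, ContinuousLinearMap.apply_apply,
          hE2, Complex.equivRealProdCLM_symm_apply, hsy, h01]
        simp [hc, Complex.equivRealProdCLM_symm_apply, Complex.ext_iff, Complex.mul_re,
          Complex.mul_im, smul_eq_mul]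
    have h3 : HasFDerivAt (fun z : ℂ => Complex.mk (fderiv ℝ u (z.re, z.im) (1,0))
        (-(fderiv ℝ u (z.re, z.im) (0,1))))
        ((ContinuousLinearMap.smulRight (1 : ℂ →L[ℂ] ℂ) c)) z := by
      apply hasFDerivAt_of_restrictScalars ℝ ?_ hrs
      convert h2 using 1
      rfl
    have := h3.hasDerivAt
    simpa using this
  have hg : Differentiable ℂ g := fun z => (hgd z).differentiableAt
  have hud : Differentiable ℝ u := hu.differentiable (by norm_num)
  have hgc : Continuous g := hg.continuous
  have hg2 : ContDiff ℂ 2 g := contDiff_iff_contDiffAt.2 fun z => (hg.analyticAt z).contDiffAt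
  have hg'c : Continuous (deriv g) := hg2.continuous_deriv (by norm_num)
  set F : ℂ → ℂ := fun z => ∫ t in (0:ℝ)..1, z * g ((t:ℂ) * z) with hFdef
  have hcont : ∀ x : ℂ, Continuous (fun t : ℝ => x * g ((t:ℂ) * x)) := fun x =>
    continuous_const.mul (hgc.comp (Complex.continuous_ofReal.mul continuous_const))
  have hFdiff : Differentiable ℂ F := by
    intro x₀
    set R := ‖x₀‖ + 1 with hR
    have hRpos : 0 < R := by positivity
    obtain ⟨C1, hC1⟩ := (isCompact_closedBall (0:ℂ) R).exists_bound_of_continuousOn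
      hgc.continuousOn
    obtain ⟨C2, hC2⟩ := (isCompact_closedBall (0:ℂ) R).exists_bound_of_continuousOn
      hg'c.continuousOn
    have hC2nn : 0 ≤ C2 := le_trans (norm_nonneg _) (hC2 0 (by simp [le_of_lt hRpos]))
    have hmem : ∀ t : ℝ, t ∈ Set.Ioc (0:ℝ) 1 → ∀ x : ℂ, x ∈ Metric.ball x₀ 1 →
        (t:ℂ) * x ∈ Metric.closedBall (0:ℂ) R := by
      intro t ht x hx
      have hxR : ‖x‖ ≤ R := by
        calc ‖x‖ = ‖x₀ + (x - x₀)‖ := by ring_nf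
        _ ≤ ‖x₀‖ + ‖x - x₀‖ := norm_add_le _ _
        _ ≤ ‖x₀‖ + 1 := by
            have := Metric.mem_ball.mp hx
            rw [dist_eq_norm] at this
            linarith
      rw [Metric.mem_closedBall, dist_zero_right]
      calc ‖(t:ℂ) * x‖ = |t| * ‖x‖ := by
            rw [norm_mul, Complex.norm_real, Real.norm_eq_abs]
      _ ≤ 1 * R := by
            apply mul_le_mul _ hxR (norm_nonneg _) zero_le_one
            rw [abs_of_pos ht.1]; exact ht.2
      _ = R := one_mul R
    have key := (intervalIntegral.hasDerivAt_integral_of_dominated_loc_of_deriv_le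
      (μ := MeasureTheory.volume) (a := (0:ℝ)) (b := 1) (x₀ := x₀)
      (F := fun x t => x * g ((t:ℂ) * x))
      (F' := fun x t => g ((t:ℂ) * x) + x * (deriv g ((t:ℂ) * x) * (t:ℂ)))
      (bound := fun _ => C1 + R * C2) (Metric.ball_mem_nhds x₀ zero_lt_one)
      (Eventually.of_forall fun x => (hcont x).aestronglyMeasurable)
      ((hcont x₀).intervalIntegrable 0 1)
      (Continuous.aestronglyMeasurable (by
        exact ((hgc.comp (Complex.continuous_ofReal.mul continuous_const)).add
          (continuous_const.mul ((hg'c.comp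
            (Complex.continuous_ofReal.mul continuous_const)).mul
            Complex.continuous_ofReal)))))
      ?_ (intervalIntegrable_const) ?_).2.differentiableAt
    · exact key
    · apply Eventually.of_forall
      intro t ht x hx
      rw [Set.uIoc_of_le (zero_le_one)] at ht
      have hmem' := hmem t ht x hx
      have h1 : ‖g ((t:ℂ)*x)‖ ≤ C1 := hC1 _ hmem'
      have h2 : ‖deriv g ((t:ℂ)*x)‖ ≤ C2 := hC2 _ hmem'
      calc ‖g ((t:ℂ) * x) + x * (deriv g ((t:ℂ) * x) * (t:ℂ))‖
          ≤ ‖g ((t:ℂ)*x)‖ + ‖x * (deriv g ((t:ℂ) * x) * (t:ℂ))‖ := norm_add_le _ _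
      _ ≤ C1 + R * C2 := by
          apply add_le_add h1
          rw [norm_mul, norm_mul, Complex.norm_real, Real.norm_eq_abs]
          have hxR : ‖x‖ ≤ R := by
            have := Metric.mem_ball.mp hx
            rw [dist_eq_norm] at this
            calc ‖x‖ = ‖x₀ + (x - x₀)‖ := by ring_nf
            _ ≤ ‖x₀‖ + ‖x - x₀‖ := norm_add_le _ _
            _ ≤ R := by rw [hR]; linarith
          have habs : |t| ≤ 1 := by rw [abs_of_pos ht.1]; exact ht.2
          calc ‖x‖ * (‖deriv g ((t:ℂ)*x)‖ * |t|) ≤ R * (C2 * 1) := by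
                apply mul_le_mul hxR _ (by positivity) (le_of_lt hRpos)
                exact mul_le_mul h2 habs (abs_nonneg t) hC2nn
          _ = R * C2 := by ring
    · apply Eventually.of_forall
      intro t ht x hx
      have h0 : HasDerivAt (fun z : ℂ => (t:ℂ) * z) ((t:ℂ)) x := by
        simpa using (hasDerivAt_id x).const_mul (t:ℂ)
      have h1 : HasDerivAt (fun z : ℂ => g ((t:ℂ)*z)) (deriv g ((t:ℂ)*x) * (t:ℂ)) x :=
        HasDerivAt.comp x ((hg ((t:ℂ)*x)).hasDerivAt) h0
      have := (hasDerivAt_id x).mul h1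
      exact this.congr_deriv (by simp)
  -- Re F
  have hReF : ∀ z : ℂ, (F z).re = u (z.re, z.im) - u (0, 0) := by
    intro z
    have hderiv : ∀ t ∈ Set.uIcc (0:ℝ) 1,
        HasDerivAt (fun t : ℝ => u (t * z.re, t * z.im)) ((z * g ((t:ℂ)*z)).re) t := by
      intro t _
      have hcurve : HasDerivAt (fun t : ℝ => (t * z.re, t * z.im)) (z.re, z.im) t :=
        (hasDerivAt_mul_const z.re).prodMk (hasDerivAt_mul_const z.im)
      have hcomp := (hud _).hasFDerivAt.comp_hasDerivAt t hcurve
      refine hcomp.congr_deriv ?_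
      have hv : ((z.re : ℝ), (z.im : ℝ)) = z.re • ((1:ℝ),(0:ℝ)) + z.im • ((0:ℝ),(1:ℝ)) := by
        simp [Prod.ext_iff]
      rw [hv, map_add, map_smul, map_smul]
      rw [hgdef]
      simp [Complex.mul_re, smul_eq_mul]
    have hcont2 : Continuous (fun t : ℝ => z * g ((t:ℂ)*z)) := hcont z
    have hint : IntervalIntegrable (fun t : ℝ => (z * g ((t:ℂ)*z)).re)
        MeasureTheory.volume 0 1 := (Complex.continuous_re.comp hcont2).intervalIntegrable 0 1
    have hftc := intervalIntegral.integral_eq_sub_of_hasDerivAt hderiv hint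
    have hcomm := ContinuousLinearMap.intervalIntegral_comp_comm Complex.reCLM
      (hcont2.intervalIntegrable (μ := MeasureTheory.volume) 0 1) (a := 0) (b := 1)
    have : (F z).re = ∫ t in (0:ℝ)..1, (z * g ((t:ℂ)*z)).re := by
      rw [hFdef]
      simp only
      rw [show (∫ (t : ℝ) in (0:ℝ)..1, z * g ((t:ℂ) * z)).re
          = Complex.reCLM (∫ (t : ℝ) in (0:ℝ)..1, z * g ((t:ℂ) * z)) from rfl, ← hcomm]
      rfl
    rw [this, hftc]
    norm_num
  -- Liouville
  have hMnn : 0 ≤ M := le_trans (abs_nonneg _) (hM (0,0))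
  have hbdd : Bornology.IsBounded (Set.range (fun z => Complex.exp (F z))) := by
    rw [Metric.isBounded_iff_subset_closedBall 0]
    refine ⟨Real.exp (2 * M), ?_⟩
    rintro w ⟨z, rfl⟩
    rw [Metric.mem_closedBall, dist_zero_right, Complex.norm_exp]
    apply Real.exp_le_exp.mpr
    rw [hReF z]
    have h1 := hM (z.re, z.im)
    have h2 := hM (0,0)
    rw [abs_le] at h1 h2
    linarith [h1.1, h1.2, h2.1, h2.2]
  have hexpdiff : Differentiable ℂ (fun z => Complex.exp (F z)) :=
    Complex.differentiable_exp.comp hFdiff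
  have hF0 : F 0 = 0 := by simp [hFdef]
  have hexp1 : ∀ z, Complex.exp (F z) = 1 := by
    intro z
    have := hexpdiff.apply_eq_apply_of_bounded hbdd z 0
    rw [this, hF0, Complex.exp_zero]
  have hre0 : ∀ z : ℂ, (F z).re = 0 := by
    intro z
    have h := congrArg (‖·‖) (hexp1 z)
    rw [Complex.norm_exp] at h
    have h' : Real.exp ((F z).re) = Real.exp 0 := by simpa using h
    exact Real.exp_eq_exp.mp h'
  have h := hre0 (Complex.mk x.1 x.2)
  rw [hReF] at h
  have hx : ((Complex.mk x.1 x.2).re, (Complex.mk x.1 x.2).im) = x := rfl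
  rw [hx] at h
  linarith

/-- Uniqueness for the two-phase Stokes problem: if `v, q` are bounded, `q` is harmonic,
`μΔv = ∇q` on `ℝ²`, and `(v, q)` tends to `(±c₁, 0, ±c₂)` as `x₂ → ±∞`,
then `q = 0`, `v = 0` and `c₁ = c₂ = 0`. -/
theorem stokes_uniqueness
    (v : ℝ × ℝ → ℝ × ℝ) (q : ℝ × ℝ → ℝ) (μ c₁ c₂ : ℝ) (hμ : 0 < μ)
    (hv_smooth : ContDiff ℝ 2 v) (hq_smooth : ContDiff ℝ 2 q)
    (hv_bdd : ∃ M : ℝ, ∀ x, ‖v x‖ ≤ M) (hq_bdd : ∃ M : ℝ, ∀ x, |q x| ≤ M)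
    (hq_harm : ∀ x : ℝ × ℝ, pd1 (pd1 q) x + pd2 (pd2 q) x = 0)
    (hstokes₁ : ∀ x : ℝ × ℝ,
      μ * (pd1 (pd1 (fun y => (v y).1)) x + pd2 (pd2 (fun y => (v y).1)) x) = pd1 q x)
    (hstokes₂ : ∀ x : ℝ × ℝ,
      μ * (pd1 (pd1 (fun y => (v y).2)) x + pd2 (pd2 (fun y => (v y).2)) x) = pd2 q x)
    (hlim_top : ∀ x₁ : ℝ,
      Tendsto (fun x₂ : ℝ => ((v (x₁, x₂)).1, (v (x₁, x₂)).2, q (x₁, x₂))) atTop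
        (nhds (c₁, 0, c₂)))
    (hlim_bot : ∀ x₁ : ℝ,
      Tendsto (fun x₂ : ℝ => ((v (x₁, x₂)).1, (v (x₁, x₂)).2, q (x₁, x₂))) atBot
        (nhds (-c₁, 0, -c₂))) :
    q = 0 ∧ v = 0 ∧ c₁ = 0 ∧ c₂ = 0 := by
  obtain ⟨Mv, hMv⟩ := hv_bdd
  obtain ⟨Mq, hMq⟩ := hq_bdd
  have hqconst : ∀ x, q x = q (0,0) := fun x => harmonic_bounded_eq hq_smooth hMq hq_harm x
  have hqtop : Tendsto (fun x₂ : ℝ => q (0, x₂)) atTop (nhds c₂) := by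
    simpa [Function.comp_def] using (Continuous.tendsto (continuous_snd.comp continuous_snd)
      ((c₁, 0, c₂) : ℝ × ℝ × ℝ)).comp (hlim_top 0)
  have hqbot : Tendsto (fun x₂ : ℝ => q (0, x₂)) atBot (nhds (-c₂)) := by
    simpa [Function.comp_def] using (Continuous.tendsto (continuous_snd.comp continuous_snd)
      ((-c₁, 0, -c₂) : ℝ × ℝ × ℝ)).comp (hlim_bot 0)
  have hqc : (fun x₂ : ℝ => q (0, x₂)) = fun _ => q (0,0) := funext fun t => hqconst (0, t)
  have hc₂a : c₂ = q (0,0) := tendsto_nhds_unique (hqc ▸ hqtop) tendsto_const_nhds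
  have hc₂b : -c₂ = q (0,0) := tendsto_nhds_unique (hqc ▸ hqbot) tendsto_const_nhds
  have hc2 : c₂ = 0 := by linarith
  have hq0 : ∀ x, q x = 0 := by intro x; rw [hqconst x]; linarith
  have hqfun : q = fun _ => (0:ℝ) := funext hq0
  have hpd1q : ∀ x, pd1 q x = 0 := by intro x; rw [hqfun]; simp [pd1]
  have hpd2q : ∀ x, pd2 q x = 0 := by intro x; rw [hqfun]; simp [pd2]
  -- v₁
  have hv1smooth : ContDiff ℝ 2 (fun y => (v y).1) := contDiff_fst.comp hv_smooth
  have hv1bdd : ∀ x, |(v x).1| ≤ Mv := fun x => le_trans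
    (by rw [← Real.norm_eq_abs]; exact norm_fst_le (v x)) (hMv x)
  have hv1harm : ∀ x, pd1 (pd1 (fun y => (v y).1)) x + pd2 (pd2 (fun y => (v y).1)) x = 0 := by
    intro x
    have h := hstokes₁ x
    rw [hpd1q x] at h
    exact (mul_eq_zero.mp h).resolve_left (ne_of_gt hμ)
  have hv1const : ∀ x, (v x).1 = (v (0,0)).1 :=
    fun x => harmonic_bounded_eq hv1smooth hv1bdd hv1harm x
  have hv1top : Tendsto (fun x₂ : ℝ => (v (0, x₂)).1) atTop (nhds c₁) := by
    simpa [Function.comp_def] using (Continuous.tendsto continuous_fst ((c₁, 0, c₂) : ℝ × ℝ × ℝ)).comp (hlim_top 0)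
  have hv1bot : Tendsto (fun x₂ : ℝ => (v (0, x₂)).1) atBot (nhds (-c₁)) := by
    simpa [Function.comp_def] using (Continuous.tendsto continuous_fst
      ((-c₁, 0, -c₂) : ℝ × ℝ × ℝ)).comp (hlim_bot 0)
  have hv1c : (fun x₂ : ℝ => (v (0, x₂)).1) = fun _ => (v (0,0)).1 :=
    funext fun t => hv1const (0, t)
  have hc₁a : c₁ = (v (0,0)).1 := tendsto_nhds_unique (hv1c ▸ hv1top) tendsto_const_nhds
  have hc₁b : -c₁ = (v (0,0)).1 := tendsto_nhds_unique (hv1c ▸ hv1bot) tendsto_const_nhds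
  have hc1 : c₁ = 0 := by linarith
  have hv10 : ∀ x, (v x).1 = 0 := by intro x; rw [hv1const x]; linarith
  -- v₂
  have hv2smooth : ContDiff ℝ 2 (fun y => (v y).2) := contDiff_snd.comp hv_smooth
  have hv2bdd : ∀ x, |(v x).2| ≤ Mv := fun x => le_trans
    (by rw [← Real.norm_eq_abs]; exact norm_snd_le (v x)) (hMv x)
  have hv2harm : ∀ x, pd1 (pd1 (fun y => (v y).2)) x + pd2 (pd2 (fun y => (v y).2)) x = 0 := by
    intro x
    have h := hstokes₂ x
    rw [hpd2q x] at h
    exact (mul_eq_zero.mp h).resolve_left (ne_of_gt hμ)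
  have hv2const : ∀ x, (v x).2 = (v (0,0)).2 :=
    fun x => harmonic_bounded_eq hv2smooth hv2bdd hv2harm x
  have hv2top : Tendsto (fun x₂ : ℝ => (v (0, x₂)).2) atTop (nhds (0:ℝ)) := by
    simpa [Function.comp_def] using (Continuous.tendsto (continuous_fst.comp continuous_snd)
      ((c₁, 0, c₂) : ℝ × ℝ × ℝ)).comp (hlim_top 0)
  have hv2c : (fun x₂ : ℝ => (v (0, x₂)).2) = fun _ => (v (0,0)).2 :=
    funext fun t => hv2const (0, t)
  have hv2z : (0:ℝ) = (v (0,0)).2 := tendsto_nhds_unique (hv2c ▸ hv2top) tendsto_const_nhds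
  have hv20 : ∀ x, (v x).2 = 0 := by intro x; rw [hv2const x]; linarith
  refine ⟨funext hq0, funext fun x => ?_, hc1, hc2⟩
  exact Prod.ext (hv10 x) (hv20 x)
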